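/- Let L be a lattice of signature (2,n), let w ∈ L⊗ℂ satisfy (w,w) = 0 and (w,w̄) > 0, and set S = {x ∈ L : (x,w) = 0 and (x,w̄) = 0} and T = {x ∈ L : (x,s) = 0 for all s ∈ S}. Let g be an isometry of L (extended ℂ-linearly to L⊗ℂ) with g(w) = α·w for some α ∈ ℂ*, α ≠ 1. If x ∈ T⊗ℂ satisfies g(x) = x, then x = 0. -/

import Mathlib

namespace A0607339

/-- Extension of scalars `ℤ → ℂ` for integer vectors. -/
def toC (ι : Type) [Fintype ι] : (ι → ℤ) →ₗ[ℤ] (ι → ℂ) where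
  toFun v i := (v i : ℂ)
  map_add' u v := by funext i; simp
  map_smul' c v := by funext i; simp

/-- The `ℤ`-valued bilinear form attached to a Gram matrix `G`. -/
def bZ {ι : Type} [Fintype ι] (G : Matrix ι ι ℤ) (x y : ι → ℤ) : ℤ :=
  dotProduct x (Matrix.mulVec G y)

/-- The `ℂ`-bilinear extension of the form attached to a Gram matrix `G`. -/
noncomputable def bC {ι : Type} [Fintype ι] (G : Matrix ι ι ℤ) (x y : ι → ℂ) : ℂ :=
  dotProduct x (Matrix.mulVec (G.map (Int.cast : ℤ → ℂ)) y)

/-- The Gram matrix `G` has `p` positive and `q` negative squares in a real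
diagonalization, i.e. the lattice has signature `(p,q)`. -/
def HasSignature {ι : Type} [Fintype ι] [DecidableEq ι] (G : Matrix ι ι ℤ) (p q : ℕ) : Prop :=
  ∃ (P : Matrix ι ι ℝ) (d : ι → ℝ), IsUnit P.det ∧
    Matrix.transpose P * G.map (Int.cast : ℤ → ℝ) * P = Matrix.diagonal d ∧
    Nat.card {i // 0 < d i} = p ∧ Nat.card {i // d i < 0} = q

/-- The `ℂ`-linear extension of a `ℤ`-linear endomorphism of the lattice. -/
noncomputable def extC {ι : Type} [Fintype ι] [DecidableEq ι]
    (g : (ι → ℤ) →ₗ[ℤ] (ι → ℤ)) : (ι → ℂ) →ₗ[ℂ] (ι → ℂ) :=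
  Matrix.toLin' ((LinearMap.toMatrix' g).map (Int.cast : ℤ → ℂ))

open Matrix Finset


lemma map_mul_cast_int {ι : Type} [Fintype ι] (M N : Matrix ι ι ℤ) :
    (M * N).map (Int.cast : ℤ → ℂ) = M.map Int.cast * N.map Int.cast := by
  ext i j
  simp only [Matrix.map_apply, Matrix.mul_apply]
  push_cast
  rfl

lemma map_mul_cast_real {ι : Type} [Fintype ι] (M N : Matrix ι ι ℝ) :
    (M * N).map (fun r : ℝ => (r : ℂ)) = M.map (fun r : ℝ => (r : ℂ)) * N.map (fun r : ℝ => (r : ℂ)) := by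
  ext i j
  simp only [Matrix.map_apply, Matrix.mul_apply]
  push_cast
  rfl

variable {ι : Type} [Fintype ι]

lemma bC_eq (G : Matrix ι ι ℤ) (x y : ι → ℂ) :
    bC G x y = ∑ i, ∑ j, x i * ((G i j : ℂ) * y j) := by
  simp [bC, dotProduct, Matrix.mulVec, Matrix.map_apply, Finset.mul_sum]

lemma bZ_eq (G : Matrix ι ι ℤ) (x y : ι → ℤ) :
    bZ G x y = ∑ i, ∑ j, x i * (G i j * y j) := by
  simp [bZ, dotProduct, Matrix.mulVec, Finset.mul_sum]

lemma bC_smul_right (G : Matrix ι ι ℤ) (x y : ι → ℂ) (r : ℂ) :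
    bC G x (r • y) = r * bC G x y := by
  simp only [bC_eq, Pi.smul_apply, smul_eq_mul, Finset.mul_sum]
  exact Finset.sum_congr rfl fun i _ => Finset.sum_congr rfl fun j _ => by ring

lemma bC_smul_left (G : Matrix ι ι ℤ) (x y : ι → ℂ) (r : ℂ) :
    bC G (r • x) y = r * bC G x y := by
  simp only [bC_eq, Pi.smul_apply, smul_eq_mul, Finset.mul_sum]
  exact Finset.sum_congr rfl fun i _ => Finset.sum_congr rfl fun j _ => by ring

lemma bC_add_right (G : Matrix ι ι ℤ) (x y z : ι → ℂ) :
    bC G x (y + z) = bC G x y + bC G x z := by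
  simp only [bC_eq, Pi.add_apply, ← Finset.sum_add_distrib]
  exact Finset.sum_congr rfl fun i _ => Finset.sum_congr rfl fun j _ => by ring

lemma bC_add_left (G : Matrix ι ι ℤ) (x y z : ι → ℂ) :
    bC G (x + y) z = bC G x z + bC G y z := by
  simp only [bC_eq, Pi.add_apply, ← Finset.sum_add_distrib]
  exact Finset.sum_congr rfl fun i _ => Finset.sum_congr rfl fun j _ => by ring

lemma bC_star_star (G : Matrix ι ι ℤ) (x y : ι → ℂ) :
    bC G (star x) (star y) = star (bC G x y) := by
  simp only [bC_eq, Pi.star_apply, star_sum, star_mul', star_intCast]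
  try exact Finset.sum_congr rfl fun i _ => Finset.sum_congr rfl fun j _ => by ring

lemma bC_int (G : Matrix ι ι ℤ) (x y : ι → ℤ) :
    bC G (toC ι x) (toC ι y) = (bZ G x y : ℂ) := by
  rw [bC_eq, bZ_eq]
  push_cast
  rfl

/-- fixed-second-argument linear functional -/
noncomputable def bCleft (G : Matrix ι ι ℤ) (y : ι → ℂ) : (ι → ℂ) →ₗ[ℂ] ℂ where
  toFun x := bC G x y
  map_add' u v := bC_add_left G u v y
  map_smul' r u := bC_smul_left G u y r

noncomputable def bCright (G : Matrix ι ι ℤ) (x : ι → ℂ) : (ι → ℂ) →ₗ[ℂ] ℂ where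
  toFun y := bC G x y
  map_add' u v := bC_add_right G x u v
  map_smul' r u := bC_smul_right G x u r

lemma dot_shift {R : Type} [CommRing R] (M N : Matrix ι ι R) (u v : ι → R) :
    dotProduct (M *ᵥ u) (N *ᵥ v) = dotProduct u ((Mᵀ * N) *ᵥ v) := by
  rw [← Matrix.vecMul_transpose, ← dotProduct_mulVec, Matrix.mulVec_mulVec]


lemma diag_key {m : Type} [Fintype m] (d : m → ℝ) (hd0 : ∀ i, d i ≠ 0)
    (hcard : Nat.card {i // 0 < d i} = 2) (t : ℝ) (ht : 0 < t) (a c : m → ℂ)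
    (S1 : ∑ i, (d i : ℂ) * (a i * star (a i)) = (t : ℂ))
    (S2 : ∑ i, (d i : ℂ) * (a i * a i) = 0)
    (S3 : ∑ i, (d i : ℂ) * (c i * a i) = 0)
    (S4 : ∑ i, (d i : ℂ) * (c i * star (a i)) = 0)
    (S5 : ∑ i, (d i : ℂ) * (c i * star (c i)) = 0) : c = 0 := by
  classical
  set h : (m → ℂ) → (m → ℂ) → ℂ := fun u v => ∑ i, (d i : ℂ) * (u i * star (v i)) with hh
  have hswap : ∀ u v, h v u = star (h u v) := by
    intro u v
    simp only [hh, star_sum, star_mul', star_star, Complex.star_def, Complex.conj_ofReal]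
    exact Finset.sum_congr rfl fun i _ => by simp only [Complex.conj_conj]; ring
  set b : m → ℂ := star a with hb
  have hbi : ∀ i, b i = star (a i) := fun i => rfl
  have haa : h a a = (t : ℂ) := S1
  have hbb : h b b = (t : ℂ) := by
    rw [← haa, hh]
    exact Finset.sum_congr rfl fun i _ => by simp only [hbi, star_star]; ring
  have hab : h a b = 0 := by
    rw [← S2, hh]
    exact Finset.sum_congr rfl fun i _ => by simp only [hbi, star_star]
  have hba : h b a = 0 := by rw [hswap, hab, star_zero]
  have hca : h c a = 0 := S4
  have hcb : h c b = 0 := by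
    rw [← S3, hh]
    exact Finset.sum_congr rfl fun i _ => by simp only [hbi, star_star]
  have hac : h a c = 0 := by rw [hswap, hca, star_zero]
  have hbc : h b c = 0 := by rw [hswap, hcb, star_zero]
  have hcc : h c c = 0 := S5
  -- the real quadratic form
  set q : (m → ℂ) → ℝ := fun v => ∑ i, d i * Complex.normSq (v i) with hq
  have hqh : ∀ v, h v v = ((q v : ℝ) : ℂ) := by
    intro v
    rw [hh, hq]
    push_cast
    exact Finset.sum_congr rfl fun i _ => by
      rw [← Complex.mul_conj]; rfl
  have hneg : ∀ v : m → ℂ, (∀ i, 0 < d i → v i = 0) → q v ≤ 0 := by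
    intro v hv
    apply Finset.sum_nonpos
    intro i _
    by_cases hi : 0 < d i
    · rw [hv i hi]; simp
    · have : d i < 0 := lt_of_le_of_ne (le_of_not_gt hi) (hd0 i)
      exact mul_nonpos_of_nonpos_of_nonneg this.le (Complex.normSq_nonneg _)
  have hneg0 : ∀ v : m → ℂ, (∀ i, 0 < d i → v i = 0) → q v = 0 → v = 0 := by
    intro v hv hqv
    funext i
    by_cases hi : 0 < d i
    · rw [hv i hi]; rfl
    · have hterm := (Finset.sum_eq_zero_iff_of_nonpos ?_).1 hqv i (Finset.mem_univ i)
      · rcases mul_eq_zero.1 hterm with h1 | h2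
        · exact absurd h1 (hd0 i)
        · simpa using Complex.normSq_eq_zero.1 h2
      · intro j _
        by_cases hj : 0 < d j
        · rw [hv j hj]; simp
        · have : d j < 0 := lt_of_le_of_ne (le_of_not_gt hj) (hd0 j)
          exact mul_nonpos_of_nonpos_of_nonneg this.le (Complex.normSq_nonneg _)
  -- bilinearity
  have h_add_l : ∀ u₁ u₂ v, h (u₁ + u₂) v = h u₁ v + h u₂ v := by
    intro u₁ u₂ v
    simp only [hh, Pi.add_apply, ← Finset.sum_add_distrib]
    exact Finset.sum_congr rfl fun i _ => by ring
  have h_add_r : ∀ u v₁ v₂, h u (v₁ + v₂) = h u v₁ + h u v₂ := by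
    intro u v₁ v₂
    simp only [hh, Pi.add_apply, star_add, ← Finset.sum_add_distrib]
    exact Finset.sum_congr rfl fun i _ => by ring
  have h_sm_l : ∀ (r : ℂ) u v, h (r • u) v = r * h u v := by
    intro r u v
    simp only [hh, Pi.smul_apply, smul_eq_mul, Finset.mul_sum]
    exact Finset.sum_congr rfl fun i _ => by ring
  have h_sm_r : ∀ (r : ℂ) u v, h u (r • v) = star r * h u v := by
    intro r u v
    simp only [hh, Pi.smul_apply, smul_eq_mul, star_mul', Finset.mul_sum]
    exact Finset.sum_congr rfl fun i _ => by ring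
  -- combination value
  have hcomb : ∀ (r s : ℂ), h (r • a + s • b) (r • a + s • b)
      = ((Complex.normSq r + Complex.normSq s) * t : ℝ) := by
    intro r s
    have e1 : ∀ z : ℂ, z * star z = ((Complex.normSq z : ℝ) : ℂ) := fun z => Complex.mul_conj z
    simp only [h_add_l, h_add_r, h_sm_l, h_sm_r, haa, hbb, hab, hba, mul_zero, add_zero, zero_add]
    rw [Complex.ofReal_mul, Complex.ofReal_add, ← e1, ← e1]
    ring
  -- positive part
  haveI : Fintype {i // 0 < d i} := Fintype.ofFinite _
  set res : (m → ℂ) → ({i // 0 < d i} → ℂ) := fun u j => u j.1 with hres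
  have hfr : Module.finrank ℂ ({i // 0 < d i} → ℂ) = 2 := by
    rw [Module.finrank_fintype_fun_eq_card, ← Nat.card_eq_fintype_card, hcard]
  have normSq_zero : ∀ r s : ℂ, (Complex.normSq r + Complex.normSq s) * t ≤ 0 → r = 0 ∧ s = 0 := by
    intro r s h3
    have h5 : Complex.normSq r = 0 ∧ Complex.normSq s = 0 := by
      constructor <;> nlinarith [Complex.normSq_nonneg r, Complex.normSq_nonneg s]
    exact ⟨Complex.normSq_eq_zero.1 h5.1, Complex.normSq_eq_zero.1 h5.2⟩
  have C1 : ∀ r s : ℂ, (∀ i, 0 < d i → r * a i + s * b i = 0) → r = 0 ∧ s = 0 := by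
    intro r s hrs
    have hv : ∀ i, 0 < d i → (r • a + s • b) i = 0 := fun i hi => by
      simpa using hrs i hi
    have h2 : q (r • a + s • b) = (Complex.normSq r + Complex.normSq s) * t :=
      Complex.ofReal_injective (by rw [← hqh]; exact hcomb r s)
    exact normSq_zero r s (h2 ▸ hneg _ hv)
  have hLI : LinearIndependent ℂ ![res a, res b] := by
    rw [LinearIndependent.pair_iff]
    intro r s hrs
    apply C1 r s
    intro i hi
    have := congrFun hrs ⟨i, hi⟩
    simpa [hres] using this
  have hspan : Submodule.span ℂ {res a, res b} = ⊤ := by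
    apply Submodule.eq_top_of_finrank_eq
    rw [hfr]
    have hrange : ({res a, res b} : Set _) = Set.range ![res a, res b] := by
      ext v
      constructor
      · rintro (rfl | rfl)
        · exact ⟨0, rfl⟩
        · exact ⟨1, rfl⟩
      · rintro ⟨j, rfl⟩
        fin_cases j
        · exact Or.inl rfl
        · exact Or.inr rfl
    rw [hrange, finrank_span_eq_card hLI]
    simp
  obtain ⟨μ, ν, hμν⟩ := Submodule.mem_span_pair.1
    (hspan ▸ Submodule.mem_top : res c ∈ Submodule.span ℂ {res a, res b})
  set u : m → ℂ := c + (-μ) • a + (-ν) • b with hu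
  have hupos : ∀ i, 0 < d i → u i = 0 := by
    intro i hi
    have h1 := congrFun hμν ⟨i, hi⟩
    simp only [Pi.add_apply, Pi.smul_apply, smul_eq_mul, hres] at h1
    simp only [hu, Pi.add_apply, Pi.smul_apply, smul_eq_mul]
    rw [← h1]
    ring
  have hcu : h u u = (((Complex.normSq μ + Complex.normSq ν) * t : ℝ) : ℂ) := by
    have e1 : ∀ z : ℂ, z * star z = ((Complex.normSq z : ℝ) : ℂ) := fun z => Complex.mul_conj z
    simp only [hu, h_add_l, h_add_r, h_sm_l, h_sm_r, haa, hbb, hab, hba, hca, hcb, hac, hbc, hcc,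
      mul_zero, zero_add, add_zero, star_neg, neg_mul, mul_neg, neg_neg, zero_mul]
    rw [Complex.ofReal_mul, Complex.ofReal_add, ← e1, ← e1]
    ring
  have h2 : q u = (Complex.normSq μ + Complex.normSq ν) * t :=
    Complex.ofReal_injective (by rw [← hqh]; exact hcu)
  obtain ⟨hμ0, hν0⟩ := normSq_zero μ ν (h2 ▸ hneg _ hupos)
  have hcpos : ∀ i, 0 < d i → c i = 0 := by
    intro i hi
    have h1 := congrFun hμν ⟨i, hi⟩
    simp only [Pi.add_apply, Pi.smul_apply, smul_eq_mul, hres, hμ0, hν0] at h1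
    simpa using h1.symm
  have hqc : q c = 0 := Complex.ofReal_injective (by rw [← hqh]; exact hcc)
  exact hneg0 c hcpos hqc


lemma rat_dec {ι : Type} [Fintype ι] [DecidableEq ι] (A : Matrix ι ι ℤ) (z : ι → ℂ)
    (hz : (A.map (Int.cast : ℤ → ℂ)) *ᵥ z = z) :
    ∃ (k : ℕ) (cf : Fin k → ℂ) (y : Fin k → ι → ℚ),
      (∀ j, (A.map (Int.cast : ℤ → ℚ)) *ᵥ y j = y j) ∧
      z = ∑ j, cf j • (fun i => (y j i : ℂ)) := by
  classical
  set V : Submodule ℚ ℂ := Submodule.span ℚ (Set.range z) with hV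
  haveI : FiniteDimensional ℚ V := FiniteDimensional.span_of_finite ℚ (Set.finite_range z)
  set k := Module.finrank ℚ V with hk
  set B : Module.Basis (Fin k) ℚ V := Module.finBasis ℚ V with hB
  set zV : ι → V := fun i => ⟨z i, Submodule.subset_span (Set.mem_range_self i)⟩ with hzV
  set y : Fin k → ι → ℚ := fun j i => B.repr (zV i) j with hy
  have hLI : LinearIndependent ℚ (fun j => ((B j : ℂ))) := by
    have := B.linearIndependent.map' V.subtype (Submodule.ker_subtype V)
    exact this
  have hzdec : ∀ i, z i = ∑ j, (y j i : ℂ) * (B j : ℂ) := by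
    intro i
    have h1 := B.sum_repr (zV i)
    have h2 := congrArg (V.subtype) h1
    simp only [map_sum, Submodule.coe_subtype] at h2
    rw [show z i = ((zV i : V) : ℂ) from rfl, ← h2]
    exact Finset.sum_congr rfl fun j _ => by
      rw [Submodule.coe_smul, Rat.smul_def]
  have hAq : ∀ j, (A.map (Int.cast : ℤ → ℚ)) *ᵥ y j = y j := by
    intro j
    funext i
    have hrow : ∑ m, (A i m : ℂ) * z m = z i := by
      have := congrFun hz i
      simpa [Matrix.mulVec, dotProduct, Matrix.map_apply] using this
    have e1 : ∑ m, (A i m : ℂ) * z m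
        = ∑ j', ((((A.map (Int.cast : ℤ → ℚ)) *ᵥ y j') i : ℚ) : ℂ) * (B j' : ℂ) := by
      calc ∑ m, (A i m : ℂ) * z m
          = ∑ m, ∑ j', (A i m : ℂ) * ((y j' m : ℂ) * (B j' : ℂ)) := by
            exact Finset.sum_congr rfl fun m _ => by rw [hzdec m, Finset.mul_sum]
        _ = ∑ j', ∑ m, (A i m : ℂ) * ((y j' m : ℂ) * (B j' : ℂ)) := Finset.sum_comm
        _ = ∑ j', ((((A.map (Int.cast : ℤ → ℚ)) *ᵥ y j') i : ℚ) : ℂ) * (B j' : ℂ) := by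
            refine Finset.sum_congr rfl fun j' _ => ?_
            have hmul : ∑ m, (A i m : ℂ) * ((y j' m : ℂ) * (B j' : ℂ))
                = (∑ m, (A i m : ℂ) * (y j' m : ℂ)) * (B j' : ℂ) := by
              rw [Finset.sum_mul]
              exact Finset.sum_congr rfl fun m _ => by ring
            rw [hmul]
            congr 1
            simp only [Matrix.mulVec, dotProduct, Matrix.map_apply]
            push_cast
            rfl
    have e2 : ∑ j', ((((A.map (Int.cast : ℤ → ℚ)) *ᵥ y j') i - y j' i : ℚ)) • ((B j' : ℂ)) = 0 := by
      have e3 : ∑ j', ((((A.map (Int.cast : ℤ → ℚ)) *ᵥ y j') i : ℚ) : ℂ) * (B j' : ℂ)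
          = ∑ j', ((y j' i : ℚ) : ℂ) * (B j' : ℂ) := by
        rw [← e1, hrow, hzdec i]
      have := sub_eq_zero.2 e3
      rw [← Finset.sum_sub_distrib] at this
      rw [← this]
      refine Finset.sum_congr rfl fun j' _ => ?_
      rw [Rat.smul_def]
      push_cast
      ring
    have := Fintype.linearIndependent_iff.1 hLI _ e2 j
    have := sub_eq_zero.1 this
    exact this
  refine ⟨k, fun j => (B j : ℂ), y, hAq, ?_⟩
  funext i
  rw [hzdec i]
  simp only [Finset.sum_apply, Pi.smul_apply, smul_eq_mul]
  exact Finset.sum_congr rfl fun j _ => by ring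


/-- **Lemma 2.5 (splitting_of_T, fixed vectors).** In the situation of Lemma 2.2, let
`g` be an isometry of `L` with `g(w) = α·w` for some `α ∈ ℂ*`, `α ≠ 1`.  If
`x ∈ T⊗ℂ` satisfies `g(x) = x`, then `x = 0`. -/
theorem stmt_3 (n : ℕ) (G : Matrix (Fin (n + 2)) (Fin (n + 2)) ℤ)
    (hsym : G.IsSymm) (hdet : G.det ≠ 0) (hsig : HasSignature G 2 n)
    (w : Fin (n + 2) → ℂ) (hww : bC G w w = 0)
    (hwwbar : ∃ t : ℝ, 0 < t ∧ bC G w (star w) = (t : ℂ))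
    (S T : Set (Fin (n + 2) → ℤ))
    (hS : S = {x | bC G (toC _ x) w = 0 ∧ bC G (toC _ x) (star w) = 0})
    (hT : T = {x | ∀ s ∈ S, bZ G x s = 0})
    (g : (Fin (n + 2) → ℤ) ≃ₗ[ℤ] (Fin (n + 2) → ℤ))
    (hgiso : ∀ x y, bZ G (g x) (g y) = bZ G x y)
    (α : ℂ) (hα0 : α ≠ 0) (hα1 : α ≠ 1)
    (hgw : extC (g : (Fin (n + 2) → ℤ) →ₗ[ℤ] (Fin (n + 2) → ℤ)) w = α • w) :
    ∀ x ∈ Submodule.span ℂ (⇑(toC (Fin (n + 2))) '' T),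
      extC (g : (Fin (n + 2) → ℤ) →ₗ[ℤ] (Fin (n + 2) → ℤ)) x = x → x = 0 := by
  classical
  obtain ⟨t, ht, hwt⟩ := hwwbar
  obtain ⟨P, d, hPdet, hPGP, hp2, _hqn⟩ := hsig
  intro x hxT hgx
  set A : Matrix (Fin (n+2)) (Fin (n+2)) ℤ :=
    LinearMap.toMatrix' (g : (Fin (n+2) → ℤ) →ₗ[ℤ] (Fin (n+2) → ℤ)) with hA
  set Ac : Matrix (Fin (n+2)) (Fin (n+2)) ℂ := A.map (Int.cast : ℤ → ℂ) with hAc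
  set Gc : Matrix (Fin (n+2)) (Fin (n+2)) ℂ := G.map (Int.cast : ℤ → ℂ) with hGc
  have hext : ∀ u : Fin (n+2) → ℂ,
      extC (g : (Fin (n+2) → ℤ) →ₗ[ℤ] (Fin (n+2) → ℤ)) u = Ac *ᵥ u := by
    intro u
    rw [extC, Matrix.toLin'_apply, hAc, hA]
  have hgA : ∀ v : Fin (n+2) → ℤ,
      (g : (Fin (n+2) → ℤ) →ₗ[ℤ] (Fin (n+2) → ℤ)) v = A *ᵥ v := by
    intro v
    rw [← Matrix.toLin'_apply, hA, Matrix.toLin'_toMatrix']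
  have entry : ∀ (M : Matrix (Fin (n+2)) (Fin (n+2)) ℤ) (i j : Fin (n+2)),
      dotProduct (Pi.single i (1:ℤ)) (M *ᵥ Pi.single j (1:ℤ)) = M i j := by
    intro M i j
    simp [Matrix.mulVec_single, single_dotProduct]
  have hAGA : Aᵀ * G * A = G := by
    ext i j
    have h2 : bZ G ((g : (Fin (n+2) → ℤ) →ₗ[ℤ] (Fin (n+2) → ℤ)) (Pi.single i 1))
        ((g : (Fin (n+2) → ℤ) →ₗ[ℤ] (Fin (n+2) → ℤ)) (Pi.single j 1))
        = bZ G (Pi.single i 1) (Pi.single j 1) := hgiso (Pi.single i 1) (Pi.single j 1)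
    rw [hgA, hgA] at h2
    simp only [bZ] at h2
    rw [Matrix.mulVec_mulVec, dot_shift, ← Matrix.mul_assoc, entry, entry] at h2
    exact h2
  have hAGAc : Acᵀ * Gc * Ac = Gc := by
    have h0 := congrArg (fun M => M.map (Int.cast : ℤ → ℂ)) hAGA
    rw [hAc, hGc]
    rw [map_mul_cast_int, map_mul_cast_int, Matrix.transpose_map] at h0
    exact h0
  have hiso_c : ∀ u v : Fin (n+2) → ℂ, bC G (Ac *ᵥ u) (Ac *ᵥ v) = bC G u v := by
    intro u v
    simp only [bC, ← hGc]
    rw [Matrix.mulVec_mulVec, dot_shift, ← Matrix.mul_assoc, hAGAc]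
  have hstarA : ∀ u : Fin (n+2) → ℂ, star (Ac *ᵥ u) = Ac *ᵥ (star u) := by
    intro u
    funext i
    simp only [Pi.star_apply, Matrix.mulVec, dotProduct, Matrix.map_apply, star_sum,
      star_mul', star_intCast, hAc]
    try exact Finset.sum_congr rfl fun m _ => mul_comm _ _
  have hgxc : Ac *ᵥ x = x := by rw [← hext]; exact hgx
  have hgwc : Ac *ᵥ w = α • w := by rw [← hext]; exact hgw
  have hgwbarc : Ac *ᵥ (star w) = star α • star w := by
    rw [← hstarA, hgwc, star_smul]
  have hstarα : star α ≠ 1 := fun hc => hα1 (by simpa using congrArg star hc)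
  have fix_orth : ∀ u : Fin (n+2) → ℂ, Ac *ᵥ u = u →
      bC G u w = 0 ∧ bC G u (star w) = 0 := by
    intro u hu
    constructor
    · have h1 : bC G u w = α * bC G u w := by
        conv_lhs => rw [← hiso_c u w, hu, hgwc, bC_smul_right]
      have h2 : (α - 1) * bC G u w = 0 := by linear_combination -h1
      rcases mul_eq_zero.1 h2 with h | h
      · exact absurd (by linear_combination h : α = 1) hα1
      · exact h
    · have h1 : bC G u (star w) = star α * bC G u (star w) := by
        conv_lhs => rw [← hiso_c u (star w), hu, hgwbarc, bC_smul_right]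
      have h2 : (star α - 1) * bC G u (star w) = 0 := by linear_combination -h1
      rcases mul_eq_zero.1 h2 with h | h
      · exact absurd (by linear_combination h : star α = 1) hstarα
      · exact h
  obtain ⟨hxw, hxwbar⟩ := fix_orth x hgxc
  -- decompose star x over ℚ
  have hgz : Ac *ᵥ (star x) = star x := by rw [← hstarA, hgxc]
  obtain ⟨k, cf, y, hyfix, hzdec⟩ := rat_dec A (star x) (by rw [← hAc]; exact hgz)
  have hyC : ∀ j, Ac *ᵥ (fun i => ((y j i : ℚ) : ℂ)) = (fun i => ((y j i : ℚ) : ℂ)) := by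
    intro j
    funext i
    have h1 := congrFun (hyfix j) i
    have h2 := congrArg (fun r : ℚ => (r : ℂ)) h1
    simp only [Matrix.mulVec, dotProduct, Matrix.map_apply] at h2 ⊢
    push_cast at h2
    rw [hAc]
    simp only [Matrix.map_apply]
    exact h2
  have hxy : ∀ j, bC G x (fun i => ((y j i : ℚ) : ℂ)) = 0 := by
    intro j
    -- first clear denominators to get an element of S
    set D : ℕ := ∏ i, (y j i).den with hD
    have hDpos : 0 < D := Finset.prod_pos fun i _ => (y j i).pos
    have hdvd : ∀ i, (y j i).den ∣ D := fun i => Finset.dvd_prod_of_mem _ (Finset.mem_univ i)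
    set s : Fin (n+2) → ℤ := fun i => ((D / (y j i).den : ℕ) : ℤ) * (y j i).num with hs
    have hsq : ∀ i, (s i : ℚ) = (D : ℚ) * y j i := by
      intro i
      obtain ⟨e, he⟩ := hdvd i
      have hde : D / (y j i).den = e := by
        rw [he, Nat.mul_div_cancel_left _ (y j i).pos]
      have hdq : ((y j i).den : ℚ) * (y j i) = ((y j i).num : ℚ) := by
        have hden : ((y j i).den : ℚ) ≠ 0 := Nat.cast_ne_zero.2 (y j i).den_nz
        have h1 : ((y j i).num : ℚ) = (y j i) * ((y j i).den : ℚ) :=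
          (div_eq_iff hden).1 (Rat.num_div_den _)
        rw [h1]
        ring
      simp only [hs, hde]
      push_cast
      rw [← hdq, he]
      push_cast
      ring
    have hsC : toC (Fin (n+2)) s = ((D : ℂ)) • (fun i => ((y j i : ℚ) : ℂ)) := by
      funext i
      have h2 := congrArg (fun r : ℚ => (r : ℂ)) (hsq i)
      push_cast at h2
      simpa [toC] using h2
    have hsS : s ∈ S := by
      rw [hS]
      exact ⟨by rw [hsC, bC_smul_left, (fix_orth _ (hyC j)).1, mul_zero],
             by rw [hsC, bC_smul_left, (fix_orth _ (hyC j)).2, mul_zero]⟩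
    have hTy : ∀ τ ∈ T, bC G (toC (Fin (n+2)) τ) (fun i => ((y j i : ℚ) : ℂ)) = 0 := by
      intro τ hτ
      have hbz : bZ G τ s = 0 := by
        rw [hT] at hτ
        exact hτ s hsS
      have h3 : bC G (toC (Fin (n+2)) τ) (toC (Fin (n+2)) s) = 0 := by
        rw [bC_int, hbz, Int.cast_zero]
      rw [hsC, bC_smul_right] at h3
      have hD0 : (D : ℂ) ≠ 0 := Nat.cast_ne_zero.2 hDpos.ne'
      exact (mul_eq_zero.1 h3).resolve_left hD0
    have hsub : (⇑(toC (Fin (n+2))) '' T) ⊆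
        (LinearMap.ker (bCleft G (fun i => ((y j i : ℚ) : ℂ))) : Set _) := by
      rintro _ ⟨τ, hτ, rfl⟩
      simp only [SetLike.mem_coe, LinearMap.mem_ker]
      exact hTy τ hτ
    have := Submodule.span_le.2 hsub hxT
    exact this
  have hxz : bC G x (star x) = 0 := by
    have h1 : (bCright G x) (star x) = 0 := by
      rw [hzdec, map_sum]
      refine Finset.sum_eq_zero fun j _ => ?_
      rw [LinearMap.map_smul]
      have h2 : (bCright G x) (fun i => ((y j i : ℚ) : ℂ)) = 0 := hxy j
      rw [h2, smul_zero]
    exact h1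
  -- now the signature argument
  set Qc : Matrix (Fin (n+2)) (Fin (n+2)) ℂ := P.map (fun r : ℝ => (r : ℂ)) with hQc
  have hGG : (G.map (Int.cast : ℤ → ℝ)).map (fun r : ℝ => (r : ℂ)) = Gc := by
    rw [Matrix.map_map, hGc]
    congr 1
  have hQGQ : Qcᵀ * Gc * Qc = Matrix.diagonal (fun i => ((d i : ℝ) : ℂ)) := by
    have h0 := congrArg (fun M => M.map (fun r : ℝ => (r : ℂ))) hPGP
    rw [map_mul_cast_real, map_mul_cast_real, Matrix.transpose_map, hGG] at h0
    rw [← hQc] at h0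
    rw [h0]
    rw [Matrix.diagonal_map (by simp)]
  have hPdet0 : P.det ≠ 0 := by
    intro h
    rw [h] at hPdet
    simpa using hPdet
  have hdet_d : ∀ i, d i ≠ 0 := by
    have h1 : (Matrix.diagonal d).det = ∏ i, d i := Matrix.det_diagonal
    have h2 : (Pᵀ * G.map (Int.cast : ℤ → ℝ) * P).det = P.det * (G.det : ℝ) * P.det := by
      rw [Matrix.det_mul, Matrix.det_mul, Matrix.det_transpose]
      rw [show (G.map (Int.cast : ℤ → ℝ)).det = ((G.det : ℝ)) from
        (RingHom.map_det (Int.castRingHom ℝ) G).symm]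
    have h3 : ∏ i, d i ≠ 0 := by
      rw [← h1, ← hPGP, h2]
      exact mul_ne_zero (mul_ne_zero hPdet0 (Int.cast_ne_zero.2 hdet)) hPdet0
    intro i
    exact Finset.prod_ne_zero_iff.1 h3 i (Finset.mem_univ i)
  have hQdet : IsUnit Qc.det := by
    rw [hQc, show (P.map (fun r : ℝ => (r : ℂ))).det = ((P.det : ℝ) : ℂ) from
      (RingHom.map_det Complex.ofRealHom P).symm]
    exact isUnit_iff_ne_zero.2 (by exact_mod_cast hPdet0)
  have hQinv : Qc * Qc⁻¹ = 1 := Matrix.mul_nonsing_inv Qc hQdet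
  have hstarQ : ∀ u : Fin (n+2) → ℂ, star (Qc *ᵥ u) = Qc *ᵥ (star u) := by
    intro u
    funext i
    simp only [Pi.star_apply, Matrix.mulVec, dotProduct, Matrix.map_apply, star_sum,
      star_mul', hQc, Complex.star_def, Complex.conj_ofReal]
    try exact Finset.sum_congr rfl fun m _ => mul_comm _ _
  have hform : ∀ u v : Fin (n+2) → ℂ,
      bC G (Qc *ᵥ u) (Qc *ᵥ v) = ∑ i, ((d i : ℝ) : ℂ) * (u i * v i) := by
    intro u v
    simp only [bC, ← hGc]
    rw [Matrix.mulVec_mulVec, dot_shift, ← Matrix.mul_assoc, hQGQ]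
    simp only [dotProduct, Matrix.mulVec_diagonal]
    exact Finset.sum_congr rfl fun i _ => by ring
  set avec : Fin (n+2) → ℂ := Qc⁻¹ *ᵥ w with hav
  set cvec : Fin (n+2) → ℂ := Qc⁻¹ *ᵥ x with hcv
  have hQa : Qc *ᵥ avec = w := by
    rw [hav, Matrix.mulVec_mulVec, hQinv, Matrix.one_mulVec]
  have hQx : Qc *ᵥ cvec = x := by
    rw [hcv, Matrix.mulVec_mulVec, hQinv, Matrix.one_mulVec]
  have hQsa : Qc *ᵥ (star avec) = star w := by rw [← hstarQ, hQa]
  have hQsc : Qc *ᵥ (star cvec) = star x := by rw [← hstarQ, hQx]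
  have S1 : ∑ i, ((d i : ℝ) : ℂ) * (avec i * star (avec i)) = (t : ℂ) := by
    have h := hform avec (star avec)
    rw [hQa, hQsa] at h
    exact h.symm.trans hwt
  have S2 : ∑ i, ((d i : ℝ) : ℂ) * (avec i * avec i) = 0 := by
    have h := hform avec avec
    rw [hQa] at h
    exact h.symm.trans hww
  have S3 : ∑ i, ((d i : ℝ) : ℂ) * (cvec i * avec i) = 0 := by
    have h := hform cvec avec
    rw [hQx, hQa] at h
    exact h.symm.trans hxw
  have S4 : ∑ i, ((d i : ℝ) : ℂ) * (cvec i * star (avec i)) = 0 := by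
    have h := hform cvec (star avec)
    rw [hQx, hQsa] at h
    exact h.symm.trans hxwbar
  have S5 : ∑ i, ((d i : ℝ) : ℂ) * (cvec i * star (cvec i)) = 0 := by
    have h := hform cvec (star cvec)
    rw [hQx, hQsc] at h
    exact h.symm.trans hxz
  have hc0 := diag_key d hdet_d hp2 t ht avec cvec S1 S2 S3 S4 S5
  rw [← hQx, hc0, Matrix.mulVec_zero]

end A0607339
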